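/- Let w : μ ↦ μ' be an evolutionary process between finite measures on the same measurable space, with fitness W and relative fitness U = W/E[W] of finite variance. Then w is purely selective (i.e., E[(⟨X⟩_w − X)·U] = 0 for every bounded measurable X) if and only if μ' is absolutely continuous with respect to μ with Radon–Nikodym derivative dμ'/dμ = W almost everywhere. -/

import Mathlib

open MeasureTheory Real Set

section Aux

variable {I : Type*} [MeasurableSpace I]

/-- Bounded measurable functions are integrable w.r.t. finite measures. -/
private lemma aux_int_of_bdd (ν : Measure I) [IsFiniteMeasure ν]
    {X : I → ℝ} (hX : Measurable X) {C : ℝ} (hC : ∀ x, |X x| ≤ C) :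
    Integrable X ν :=
  (integrable_const C).mono' hX.aestronglyMeasurable
    (ae_of_all _ fun y => by simpa [Real.norm_eq_abs] using hC y)

/-- Measurability of `i ↦ ∫ X ∂(w i)` for a measurable family of finite measures. -/
private lemma aux_meas_integral (w : I → Measure I) (hwfin : ∀ i, IsFiniteMeasure (w i))
    (hwmeas : Measurable w)
    {X : I → ℝ} (hX : Measurable X) {C : ℝ} (hC : ∀ x, |X x| ≤ C) :
    Measurable fun i => ∫ y, X y ∂(w i) := by
  haveI := hwfin
  have hrw : (fun i => ∫ y, X y ∂(w i)) = fun i =>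
      (∫⁻ y, ENNReal.ofReal (X y) ∂(w i)).toReal -
        (∫⁻ y, ENNReal.ofReal (-X y) ∂(w i)).toReal := by
    funext i
    exact integral_eq_lintegral_pos_part_sub_lintegral_neg_part (aux_int_of_bdd (w i) hX hC)
  rw [hrw]
  exact (((Measure.measurable_lintegral hX.ennreal_ofReal).comp hwmeas).ennreal_toReal.sub
    ((Measure.measurable_lintegral hX.neg.ennreal_ofReal).comp hwmeas).ennreal_toReal)

/-- Fubini-type identity for `Measure.bind` and nonnegative bounded integrands. -/
private lemma aux_integral_bind_nonneg (μ : Measure I) [IsFiniteMeasure μ]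
    (w : I → Measure I) (hwfin : ∀ i, IsFiniteMeasure (w i)) (hwmeas : Measurable w)
    {g : I → ℝ} (hg : Measurable g) (hg0 : ∀ y, 0 ≤ g y) {C : ℝ} (hgC : ∀ y, g y ≤ C) :
    ∫ i, (∫ y, g y ∂(w i)) ∂μ = ∫ y, g y ∂(μ.bind w) := by
  haveI := hwfin
  have hg' : Measurable fun y => ENNReal.ofReal (g y) := hg.ennreal_ofReal
  have h1 : ∀ ν : Measure I, ∫ y, g y ∂ν = (∫⁻ y, ENNReal.ofReal (g y) ∂ν).toReal := fun ν =>
    integral_eq_lintegral_of_nonneg_ae (ae_of_all _ hg0) hg.aestronglyMeasurable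
  have hF : Measurable fun i => ∫⁻ y, ENNReal.ofReal (g y) ∂(w i) :=
    (Measure.measurable_lintegral hg').comp hwmeas
  have hFfin : ∀ i, (∫⁻ y, ENNReal.ofReal (g y) ∂(w i)) < ⊤ := by
    intro i
    calc ∫⁻ y, ENNReal.ofReal (g y) ∂(w i)
        ≤ ∫⁻ _, ENNReal.ofReal C ∂(w i) :=
          lintegral_mono fun y => ENNReal.ofReal_le_ofReal (hgC y)
      _ = ENNReal.ofReal C * (w i) univ := by rw [lintegral_const]
      _ < ⊤ := ENNReal.mul_lt_top ENNReal.ofReal_lt_top (measure_lt_top _ _)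
  calc ∫ i, (∫ y, g y ∂(w i)) ∂μ
      = ∫ i, (∫⁻ y, ENNReal.ofReal (g y) ∂(w i)).toReal ∂μ := by simp_rw [h1]
    _ = (∫⁻ i, ∫⁻ y, ENNReal.ofReal (g y) ∂(w i) ∂μ).toReal :=
        integral_toReal hF.aemeasurable (ae_of_all _ hFfin)
    _ = (∫⁻ y, ENNReal.ofReal (g y) ∂(μ.bind w)).toReal := by
        rw [Measure.lintegral_bind hwmeas.aemeasurable hg'.aemeasurable]
    _ = ∫ y, g y ∂(μ.bind w) := (h1 _).symm

/-- Fubini-type identity for `Measure.bind` and bounded measurable integrands. -/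
private lemma aux_integral_bind (μ : Measure I) [IsFiniteMeasure μ]
    (w : I → Measure I) (hwfin : ∀ i, IsFiniteMeasure (w i)) (hwmeas : Measurable w)
    (hWint : Integrable (fun i => ((w i) univ).toReal) μ)
    {X : I → ℝ} (hX : Measurable X) {C : ℝ} (hC : ∀ x, |X x| ≤ C) :
    ∫ i, (∫ y, X y ∂(w i)) ∂μ = ∫ y, X y ∂(μ.bind w) := by
  haveI := hwfin
  set Xp : I → ℝ := fun y => max (X y) 0 with hXp_def
  set Xm : I → ℝ := fun y => max (-X y) 0 with hXm_def
  have hXp : Measurable Xp := hX.max measurable_const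
  have hXm : Measurable Xm := hX.neg.max measurable_const
  have hXp0 : ∀ y, 0 ≤ Xp y := fun y => le_max_right _ _
  have hXm0 : ∀ y, 0 ≤ Xm y := fun y => le_max_right _ _
  have hXpC : ∀ y, Xp y ≤ |C| := fun y =>
    max_le ((le_abs_self _).trans ((hC y).trans (le_abs_self C))) (abs_nonneg C)
  have hXmC : ∀ y, Xm y ≤ |C| := fun y =>
    max_le ((neg_le_abs _).trans ((hC y).trans (le_abs_self C))) (abs_nonneg C)
  have hXpabs : ∀ y, |Xp y| ≤ |C| := fun y => by
    rw [abs_of_nonneg (hXp0 y)]; exact hXpC y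
  have hXmabs : ∀ y, |Xm y| ≤ |C| := fun y => by
    rw [abs_of_nonneg (hXm0 y)]; exact hXmC y
  have hsplit : ∀ y, X y = Xp y - Xm y := fun y => by
    simp only [hXp_def, hXm_def]
    rcases le_total (X y) 0 with h | h
    · rw [max_eq_right h, max_eq_left (by linarith)]; ring
    · rw [max_eq_left h, max_eq_right (by linarith)]; ring
  have hsub : ∀ ν : Measure I, IsFiniteMeasure ν →
      ∫ y, X y ∂ν = ∫ y, Xp y ∂ν - ∫ y, Xm y ∂ν := by
    intro ν hν
    haveI := hν
    rw [← integral_sub (aux_int_of_bdd ν hXp hXpabs) (aux_int_of_bdd ν hXm hXmabs)]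
    exact integral_congr_ae (ae_of_all _ fun y => hsplit y)
  -- outer integrability for the two parts
  have houter : ∀ (g : I → ℝ), Measurable g → (∀ y, 0 ≤ g y) → (∀ y, g y ≤ |C|) →
      Integrable (fun i => ∫ y, g y ∂(w i)) μ := by
    intro g hg hg0 hgC
    refine (hWint.mul_const |C|).mono'
      ((aux_meas_integral w hwfin hwmeas hg (C := |C|) fun y => by
        rw [abs_of_nonneg (hg0 y)]; exact hgC y).aestronglyMeasurable)
      (ae_of_all _ fun i => ?_)
    rw [Real.norm_eq_abs]
    calc |∫ y, g y ∂(w i)| ≤ ∫ y, |g y| ∂(w i) := by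
          simpa [Real.norm_eq_abs] using norm_integral_le_integral_norm (μ := w i) g
      _ ≤ ∫ _, |C| ∂(w i) := by
          refine integral_mono (aux_int_of_bdd (w i) hg
            (C := |C|) (fun y => by rw [abs_of_nonneg (hg0 y)]; exact hgC y)).abs
            (integrable_const _) fun y => by rw [abs_of_nonneg (hg0 y)]; exact hgC y
      _ = ((w i) univ).toReal * |C| := by rw [integral_const, smul_eq_mul, measureReal_def]
  have hw_int_finite : IsFiniteMeasure (μ.bind w) := by
    constructor
    rw [Measure.bind_apply MeasurableSet.univ hwmeas.aemeasurable]
    calc ∫⁻ i, (w i) univ ∂μ ≤ ∫⁻ i, ENNReal.ofReal (((w i) univ).toReal) ∂μ := by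
          refine lintegral_mono fun i => ?_
          rw [ENNReal.ofReal_toReal (measure_ne_top _ _)]
      _ = ENNReal.ofReal (∫ i, ((w i) univ).toReal ∂μ) :=
          (ofReal_integral_eq_lintegral_ofReal hWint
            (ae_of_all _ fun i => ENNReal.toReal_nonneg)).symm
      _ < ⊤ := ENNReal.ofReal_lt_top
  haveI := hw_int_finite
  calc ∫ i, (∫ y, X y ∂(w i)) ∂μ
      = ∫ i, (∫ y, Xp y ∂(w i)) - (∫ y, Xm y ∂(w i)) ∂μ := by
        refine integral_congr_ae (ae_of_all _ fun i => ?_)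
        exact hsub (w i) (hwfin i)
    _ = (∫ i, (∫ y, Xp y ∂(w i)) ∂μ) - ∫ i, (∫ y, Xm y ∂(w i)) ∂μ :=
        integral_sub (houter Xp hXp hXp0 hXpC) (houter Xm hXm hXm0 hXmC)
    _ = (∫ y, Xp y ∂(μ.bind w)) - ∫ y, Xm y ∂(μ.bind w) := by
        rw [aux_integral_bind_nonneg μ w hwfin hwmeas hXp hXp0 hXpC,
          aux_integral_bind_nonneg μ w hwfin hwmeas hXm hXm0 hXmC]
    _ = ∫ y, X y ∂(μ.bind w) := (hsub _ hw_int_finite).symm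

end Aux

/-- A process `w : μ ↦ μ'` (on a common space) is purely selective — i.e. the
environmental change `E[(⟨X⟩_w − X)·U]` vanishes for every bounded measurable
observable `X` — if and only if `μ'` is absolutely continuous with respect to `μ`
with Radon–Nikodym density equal to the fitness `W`. -/
theorem purely_selective_iff_absolutely_continuous
    {I : Type*} [MeasurableSpace I]
    (μ μ' : Measure I) [IsFiniteMeasure μ] [IsFiniteMeasure μ']
    (hN : 0 < (μ univ).toReal) (hN' : 0 < (μ' univ).toReal)
    (w : I → Measure I) (hwfin : ∀ i, IsFiniteMeasure (w i))
    (hwm : ∀ B : Set I, MeasurableSet B → Measurable fun i => w i B)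
    (hdis : ∀ B : Set I, MeasurableSet B → μ' B = ∫⁻ i, w i B ∂μ)
    (hvar : Integrable (fun i => ((w i univ).toReal) ^ 2) μ) :
    let N := (μ univ).toReal
    let N' := (μ' univ).toReal
    let W : I → ℝ := fun i => (w i univ).toReal
    let U : I → ℝ := fun i => W i / (N' / N)
    let lavg : (I → ℝ) → I → ℝ := fun X i => (∫ y, X y ∂(w i)) / W i
    ((∀ X : I → ℝ, Measurable X → (∃ C, ∀ x, |X x| ≤ C) →
        (∫ i, (lavg X i - X i) * U i ∂μ) = 0) ↔
      μ' = μ.withDensity (fun i => ENNReal.ofReal (W i))) := by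
  intro N N' W U lavg
  haveI := hwfin
  have hwmeas : Measurable w := Measure.measurable_of_measurable_coe w hwm
  have hWm : Measurable W := ((Measure.measurable_coe MeasurableSet.univ).comp hwmeas).ennreal_toReal
  have hW0 : ∀ i, 0 ≤ W i := fun _ => ENNReal.toReal_nonneg
  have hr : 0 < N' / N := div_pos hN' hN
  have hWint : Integrable W μ := by
    refine (((integrable_const (1 : ℝ)).add hvar).div_const 2).mono
      hWm.aestronglyMeasurable (ae_of_all _ fun i => ?_)
    have h0 := hW0 i
    simp only [Pi.add_apply]
    rw [Real.norm_eq_abs, Real.norm_eq_abs, abs_of_nonneg h0, abs_of_nonneg (by positivity)]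
    nlinarith [sq_nonneg (W i - 1)]
  have hbind : μ' = μ.bind w := by
    ext B hB
    rw [hdis B hB, Measure.bind_apply hB hwmeas.aemeasurable]
  -- pointwise identity for the integrand
  have hpt : ∀ (X : I → ℝ) (i : I),
      (lavg X i - X i) * U i = (∫ y, X y ∂(w i)) / (N' / N) - X i * U i := by
    intro X i
    show ((∫ y, X y ∂(w i)) / W i - X i) * (W i / (N' / N)) = _
    by_cases h : W i = 0
    · have hw0 : w i = 0 := by
        have huniv : (w i) univ = 0 := by
          have hne := (measure_lt_top (w i) univ).ne
          have := ENNReal.toReal_eq_zero_iff ((w i) univ)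
          rw [show ((w i) univ).toReal = W i from rfl] at this
          rcases this.mp h with h' | h'
          · exact h'
          · exact absurd h' hne
        exact Measure.measure_univ_eq_zero.mp huniv
      show ((∫ y, X y ∂(w i)) / W i - X i) * (W i / (N' / N)) =
        (∫ y, X y ∂(w i)) / (N' / N) - X i * (W i / (N' / N))
      rw [h, hw0]
      simp
    · show ((∫ y, X y ∂(w i)) / W i - X i) * (W i / (N' / N)) =
        (∫ y, X y ∂(w i)) / (N' / N) - X i * (W i / (N' / N))
      field_simp
  constructor
  · -- purely selective ⇒ density is W
    intro H
    ext B hB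
    have hX : Measurable (B.indicator fun _ => (1 : ℝ)) := measurable_const.indicator hB
    have hXbdd : ∀ x, |B.indicator (fun _ => (1 : ℝ)) x| ≤ 1 := fun x => by
      by_cases hx : x ∈ B <;> simp [Set.indicator_apply, hx]
    have hHB := H _ hX ⟨1, hXbdd⟩
    have hwBint : Integrable (fun i => ((w i) B).toReal) μ := by
      refine hWint.mono ((hwm B hB).ennreal_toReal.aestronglyMeasurable)
        (ae_of_all _ fun i => ?_)
      rw [Real.norm_eq_abs, Real.norm_eq_abs, abs_of_nonneg ENNReal.toReal_nonneg,
        abs_of_nonneg (hW0 i)]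
      exact ENNReal.toReal_mono (measure_ne_top _ _) (measure_mono (subset_univ B))
    have e1 : ∀ i, (lavg (B.indicator fun _ => (1 : ℝ)) i -
        (B.indicator fun _ => (1 : ℝ)) i) * U i
        = ((w i) B).toReal / (N' / N) - B.indicator U i := by
      intro i
      rw [hpt]
      congr 1
      · congr 1
        rw [integral_indicator_const (1 : ℝ) hB, smul_eq_mul, mul_one, measureReal_def]
      · by_cases hx : i ∈ B <;> simp [Set.indicator_apply, hx]
    rw [integral_congr_ae (ae_of_all _ e1)] at hHB
    have hInt1 : Integrable (fun i => ((w i) B).toReal / (N' / N)) μ := hwBint.div_const _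
    have hInt2 : Integrable (B.indicator U) μ := (hWint.div_const _).indicator hB
    rw [integral_sub hInt1 hInt2, sub_eq_zero] at hHB
    have hlhs : ∫ i, ((w i) B).toReal / (N' / N) ∂μ = (μ' B).toReal / (N' / N) := by
      rw [integral_div]
      congr 1
      rw [hdis B hB]
      exact (integral_toReal ((hwm B hB).aemeasurable)
        (ae_of_all _ fun i => measure_lt_top (w i) B))
    have hrhs : ∫ i, B.indicator U i ∂μ = (∫ i in B, W i ∂μ) / (N' / N) := by
      rw [integral_indicator hB]
      exact integral_div _ _
    rw [hlhs, hrhs, div_eq_div_iff hr.ne' hr.ne'] at hHB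
    have hmain : (μ' B).toReal = ∫ i in B, W i ∂μ :=
      mul_right_cancel₀ hr.ne' hHB
    rw [withDensity_apply _ hB]
    have hsl : ∫⁻ a in B, ENNReal.ofReal (W a) ∂μ = ENNReal.ofReal (∫ a in B, W a ∂μ) :=
      (ofReal_integral_eq_lintegral_ofReal hWint.restrict
        (ae_of_all _ fun i => hW0 i)).symm
    rw [hsl, ← hmain, ENNReal.ofReal_toReal (measure_ne_top μ' B)]
  · -- density is W ⇒ purely selective
    rintro heq X hX ⟨C, hC⟩
    have hkey : ∫ i, (∫ y, X y ∂(w i)) ∂μ = ∫ y, X y ∂μ' := by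
      rw [hbind]
      exact aux_integral_bind μ w hwfin hwmeas hWint hX hC
    have hIwX : Integrable (fun i => (∫ y, X y ∂(w i)) / (N' / N)) μ := by
      refine Integrable.div_const ?_ _
      refine (hWint.mul_const |C|).mono'
        ((aux_meas_integral w hwfin hwmeas hX hC).aestronglyMeasurable)
        (ae_of_all _ fun i => ?_)
      rw [Real.norm_eq_abs]
      calc |∫ y, X y ∂(w i)| ≤ ∫ y, |X y| ∂(w i) := by
            simpa [Real.norm_eq_abs] using norm_integral_le_integral_norm (μ := w i) X
        _ ≤ ∫ _, |C| ∂(w i) := by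
            refine integral_mono (aux_int_of_bdd (w i) hX hC).abs (integrable_const _)
              fun y => (hC y).trans (le_abs_self C)
        _ = ((w i) univ).toReal * |C| := by rw [integral_const, smul_eq_mul, measureReal_def]
    have hXU : Integrable (fun i => X i * U i) μ :=
      (hWint.div_const _).bdd_mul hX.aestronglyMeasurable
        (ae_of_all _ fun x => by rw [Real.norm_eq_abs]; exact hC x)
    rw [integral_congr_ae (ae_of_all _ (hpt X)), integral_sub hIwX hXU, sub_eq_zero,
      integral_div, hkey]
    have hU : ∀ i, X i * U i = X i * W i / (N' / N) := fun i => by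
      show X i * (W i / (N' / N)) = X i * W i / (N' / N)
      ring
    rw [integral_congr_ae (ae_of_all _ hU), integral_div]
    congr 1
    rw [heq]
    have hd : (fun i => ENNReal.ofReal (W i)) = fun i => (((W i).toNNReal : NNReal) : ENNReal) :=
      rfl
    rw [hd, integral_withDensity_eq_integral_smul (f := fun i => (W i).toNNReal)
      (measurable_real_toNNReal.comp hWm) X]
    refine integral_congr_ae (ae_of_all _ fun i => ?_)
    show (W i).toNNReal • X i = X i * W i
    rw [NNReal.smul_def, smul_eq_mul, Real.coe_toNNReal _ (hW0 i)]
    ring
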